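/- For any constants α ∈ (0,1], k > 0, there exist constants a₁, a₂ > 0 such that for every λ ≥ 1, defining h_{λ,α}(t) := min{(min(1/2, t))^(-1/(2α)), λ^(1/2)}, one has ∫₀^∞ h_{λ,α}(t) e^{-kt} dt ≤ a₂ λ^((1/2 - α)⁺) (1 + 1_{α = 1/2} log(1 + λ)). -/

import Mathlib

open MeasureTheory Set intervalIntegral

lemma aux_main (α k lam : ℝ) (hα : 0 < α) (hk : 0 < k) (hlam : 1 ≤ lam) :
    (∫ t in Ioi (0:ℝ),
        min ((min (1/2) t) ^ (-(1/(2*α)))) (lam ^ ((1:ℝ)/2)) * Real.exp (-(k * t)))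
      ≤ lam ^ ((1:ℝ)/2 - α)
        + (2:ℝ) ^ (1/(2*α)) * (∫ x in (lam ^ (-α) : ℝ)..(1:ℝ), x ^ (-(1/(2*α))))
        + (2:ℝ) ^ (1/(2*α)) * ∫ t in Ioi (1:ℝ), Real.exp (-(k * t)) := by
  set c : ℝ := 1/(2*α) with hc_def
  have hc : 0 < c := by positivity
  have hlam0 : (0:ℝ) < lam := lt_of_lt_of_le one_pos hlam
  set τ : ℝ := lam ^ (-α) with hτ_def
  have hτ0 : 0 < τ := Real.rpow_pos_of_pos hlam0 _
  have hτ1 : τ ≤ 1 := Real.rpow_le_one_of_one_le_of_nonpos hlam (by linarith)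
  set M : ℝ := lam ^ ((1:ℝ)/2) with hM_def
  have hM0 : 0 < M := Real.rpow_pos_of_pos hlam0 _
  set g : ℝ → ℝ := fun t => min ((min (1/2) t) ^ (-c)) M * Real.exp (-(k * t)) with hg_def
  have h2c0 : (0:ℝ) < (2:ℝ) ^ c := Real.rpow_pos_of_pos two_pos _
  have hhalf : ((1:ℝ)/2) ^ (-c) = (2:ℝ) ^ c := by
    rw [one_div, Real.inv_rpow (by norm_num : (0:ℝ) ≤ 2), Real.rpow_neg (by norm_num : (0:ℝ) ≤ 2),
      inv_inv]
  have hrc : ContinuousOn (fun t : ℝ => (min (1/2) t) ^ (-c)) (Ioi 0) := by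
    apply ContinuousOn.rpow_const ((continuous_const.min continuous_id).continuousOn)
    intro x hx
    exact Or.inl (ne_of_gt (lt_min (by norm_num) hx))
  have hcontg : ContinuousOn g (Ioi 0) := by
    apply ContinuousOn.mul
    · exact fun x hx => Filter.Tendsto.min (hrc x hx) tendsto_const_nhds
    · exact (Real.continuous_exp.comp (continuous_const.mul continuous_id).neg).continuousOn
  have hgnn : ∀ t ∈ Ioi (0:ℝ), 0 ≤ g t := by
    intro t ht
    apply mul_nonneg _ (Real.exp_nonneg _)
    exact le_min (Real.rpow_nonneg (le_min (by norm_num) (le_of_lt ht)) _) hM0.le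
  have hgint : IntegrableOn g (Ioi 0) := by
    refine Integrable.mono' ((exp_neg_integrableOn_Ioi 0 hk).const_mul M)
      (hcontg.aestronglyMeasurable measurableSet_Ioi) ?_
    filter_upwards [ae_restrict_mem measurableSet_Ioi] with t ht
    rw [Real.norm_eq_abs, abs_of_nonneg (hgnn t ht), neg_mul]
    exact mul_le_mul_of_nonneg_right (min_le_right _ _) (Real.exp_nonneg _)
  have hsubA : Ioc (0:ℝ) τ ⊆ Ioi 0 := Ioc_subset_Ioi_self
  have hsubB : Ioc τ (1:ℝ) ⊆ Ioi 0 := fun x hx => lt_trans hτ0 hx.1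
  have hsub1 : Ioc (0:ℝ) 1 ⊆ Ioi 0 := Ioc_subset_Ioi_self
  have hsubC : Ioi (1:ℝ) ⊆ Ioi 0 := Ioi_subset_Ioi (by norm_num)
  have eq1 : (∫ t in Ioi (0:ℝ), g t) = (∫ t in Ioc (0:ℝ) 1, g t) + ∫ t in Ioi (1:ℝ), g t := by
    rw [← Ioc_union_Ioi_eq_Ioi (by norm_num : (0:ℝ) ≤ 1)]
    exact setIntegral_union Ioc_disjoint_Ioi_same measurableSet_Ioi
      (hgint.mono_set hsub1) (hgint.mono_set hsubC)
  have eq2 : (∫ t in Ioc (0:ℝ) 1, g t) = (∫ t in Ioc (0:ℝ) τ, g t) + ∫ t in Ioc τ (1:ℝ), g t := by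
    rw [← Ioc_union_Ioc_eq_Ioc hτ0.le hτ1]
    exact setIntegral_union (Ioc_disjoint_Ioc_of_le le_rfl) measurableSet_Ioc
      (hgint.mono_set hsubA) (hgint.mono_set hsubB)
  -- piece A
  have boundA : (∫ t in Ioc (0:ℝ) τ, g t) ≤ lam ^ ((1:ℝ)/2 - α) := by
    have h1 : (∫ t in Ioc (0:ℝ) τ, g t) ≤ ∫ _t in Ioc (0:ℝ) τ, M := by
      refine setIntegral_mono_on (hgint.mono_set hsubA)
        (integrableOn_const measure_Ioc_lt_top.ne) measurableSet_Ioc ?_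
      intro t ht
      calc g t ≤ min ((min (1/2) t) ^ (-c)) M * 1 := by
                  apply mul_le_mul_of_nonneg_left _
                    (le_min (Real.rpow_nonneg (le_min (by norm_num) ht.1.le) _) hM0.le)
                  exact Real.exp_le_one_iff.mpr (by nlinarith [ht.1])
        _ ≤ M := by rw [mul_one]; exact min_le_right _ _
    have h2 : (∫ _t in Ioc (0:ℝ) τ, M) = τ * M := by
      rw [setIntegral_const, Real.volume_real_Ioc_of_le hτ0.le, smul_eq_mul]
      ring_nf
    have h3 : τ * M = lam ^ ((1:ℝ)/2 - α) := by
      rw [hτ_def, hM_def, ← Real.rpow_add hlam0]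
      ring_nf
    linarith
  -- piece B
  have boundB : (∫ t in Ioc τ (1:ℝ), g t) ≤ (2:ℝ) ^ c * ∫ x in τ..(1:ℝ), x ^ (-c) := by
    have hcont2 : ContinuousOn (fun t : ℝ => (2:ℝ) ^ c * t ^ (-c)) (Icc τ 1) := by
      apply continuousOn_const.mul
      apply ContinuousOn.rpow_const continuousOn_id
      intro x hx
      exact Or.inl (ne_of_gt (lt_of_lt_of_le hτ0 hx.1))
    have hint2 : IntegrableOn (fun t : ℝ => (2:ℝ) ^ c * t ^ (-c)) (Ioc τ 1) :=
      (hcont2.integrableOn_Icc).mono_set Ioc_subset_Icc_self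
    have h1 : (∫ t in Ioc τ (1:ℝ), g t) ≤ ∫ t in Ioc τ (1:ℝ), (2:ℝ) ^ c * t ^ (-c) := by
      refine setIntegral_mono_on (hgint.mono_set hsubB) hint2 measurableSet_Ioc ?_
      intro t ht
      have ht0 : 0 < t := lt_trans hτ0 ht.1
      have hmin : t/2 ≤ min (1/2) t := by
        rcases le_total t (1/2) with h | h
        · rw [min_eq_right h]; linarith
        · rw [min_eq_left h]; linarith [ht.2]
      calc g t ≤ (min (1/2) t) ^ (-c) * 1 := by
                  apply mul_le_mul (min_le_left _ _) (Real.exp_le_one_iff.mpr (by nlinarith))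
                    (Real.exp_nonneg _) (Real.rpow_nonneg (le_min (by norm_num) ht0.le) _)
        _ = (min (1/2) t) ^ (-c) := mul_one _
        _ ≤ (t/2) ^ (-c) := Real.rpow_le_rpow_of_nonpos (by linarith) hmin (by linarith)
        _ = (2:ℝ) ^ c * t ^ (-c) := by
              rw [div_eq_mul_inv, ← one_div,
                Real.mul_rpow ht0.le (by norm_num : (0:ℝ) ≤ 1/2), hhalf]
              ring
    have h2 : (∫ t in Ioc τ (1:ℝ), (2:ℝ) ^ c * t ^ (-c)) = (2:ℝ) ^ c * ∫ x in τ..(1:ℝ), x ^ (-c) := by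
      rw [intervalIntegral.integral_of_le hτ1, MeasureTheory.integral_const_mul]
    linarith
  -- piece C
  have boundC : (∫ t in Ioi (1:ℝ), g t) ≤ (2:ℝ) ^ c * ∫ t in Ioi (1:ℝ), Real.exp (-(k * t)) := by
    have h2 : (∫ t in Ioi (1:ℝ), (2:ℝ) ^ c * Real.exp (-(k * t)))
        = (2:ℝ) ^ c * ∫ t in Ioi (1:ℝ), Real.exp (-(k * t)) := MeasureTheory.integral_const_mul _ _
    have h1 : (∫ t in Ioi (1:ℝ), g t) ≤ ∫ t in Ioi (1:ℝ), (2:ℝ) ^ c * Real.exp (-(k * t)) := by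
      have hie : IntegrableOn (fun t : ℝ => (2:ℝ) ^ c * Real.exp (-(k * t))) (Ioi 1) := by
        have := (exp_neg_integrableOn_Ioi 1 hk).const_mul ((2:ℝ) ^ c)
        simpa [neg_mul, IntegrableOn] using this
      refine setIntegral_mono_on (hgint.mono_set hsubC) hie measurableSet_Ioi ?_
      intro t ht
      have h12 : min (1/2) t = (1/2:ℝ) := min_eq_left (by simp at ht; linarith)
      rw [hg_def]
      simp only [h12, hhalf]
      exact mul_le_mul_of_nonneg_right (min_le_left _ _) (Real.exp_nonneg _)
    linarith
  calc (∫ t in Ioi (0:ℝ), g t) = (∫ t in Ioc (0:ℝ) τ, g t) + (∫ t in Ioc τ (1:ℝ), g t)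
        + ∫ t in Ioi (1:ℝ), g t := by rw [eq1, eq2]
    _ ≤ _ := add_le_add (add_le_add boundA boundB) boundC

/-- For any constants `α ∈ (0,1]`, `k > 0`, there exist constants `a₁, a₂ > 0` such that
for every `λ ≥ 1`, with `h_{λ,α}(t) := min ((min (1/2) t)^(-1/(2α))) (λ^(1/2))`,
`∫₀^∞ h_{λ,α}(t) e^{-kt} dt ≤ a₂ λ^((1/2 - α)⁺) (1 + 1_{α = 1/2} log (1 + λ))`. -/
theorem stmt0 (α k : ℝ) (hα : 0 < α) (hα1 : α ≤ 1) (hk : 0 < k) :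
    ∃ a₁ a₂ : ℝ, 0 < a₁ ∧ 0 < a₂ ∧ ∀ lam : ℝ, 1 ≤ lam →
      (∫ t in Ioi (0:ℝ),
          min ((min (1/2) t) ^ (-(1/(2*α)))) (lam ^ ((1:ℝ)/2)) * Real.exp (-(k * t)))
        ≤ a₂ * lam ^ (max (1/2 - α) 0) *
            (1 + (if α = 1/2 then Real.log (1 + lam) else 0)) := by
  obtain ⟨D, hD_def⟩ : ∃ D : ℝ, D = ∫ t in Ioi (1:ℝ), Real.exp (-(k * t)) := ⟨_, rfl⟩
  have hD0 : 0 ≤ D := hD_def ▸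
    setIntegral_nonneg measurableSet_Ioi fun t _ => (Real.exp_pos _).le
  rcases lt_trichotomy α (1/2) with hlt | heq | hgt
  · -- α < 1/2, c > 1
    obtain ⟨c, hc_def⟩ : ∃ c : ℝ, c = 1/(2*α) := ⟨_, rfl⟩
    rw [show (1:ℝ)/(2*α) = c from hc_def.symm]
    have hc : 0 < c := by rw [hc_def]; positivity
    have h2c0 : (0:ℝ) < (2:ℝ) ^ c := Real.rpow_pos_of_pos two_pos _
    have hc1 : 1 < c := by
      rw [hc_def]
      exact (one_lt_div (by positivity)).mpr (by linarith)
    have ha2 : (0:ℝ) < 1 + (2:ℝ)^c/(c-1) + (2:ℝ)^c * D := by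
      have h1 : 0 ≤ (2:ℝ)^c/(c-1) := div_nonneg h2c0.le (by linarith)
      have h2 : 0 ≤ (2:ℝ)^c * D := mul_nonneg h2c0.le hD0
      linarith
    refine ⟨1, 1 + (2:ℝ)^c/(c-1) + (2:ℝ)^c * D, one_pos, ha2, ?_⟩
    intro lam hlam
    have hlam0 : (0:ℝ) < lam := lt_of_lt_of_le one_pos hlam
    have hτ0 : (0:ℝ) < lam ^ (-α) := Real.rpow_pos_of_pos hlam0 _
    have key := aux_main α k lam hα hk hlam
    rw [← hc_def, ← hD_def] at key
    have hαc : α * c = 1/2 := by rw [hc_def]; field_simp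
    have hL0 : (0:ℝ) ≤ lam ^ ((1:ℝ)/2 - α) := Real.rpow_nonneg hlam0.le _
    have hL1 : (1:ℝ) ≤ lam ^ ((1:ℝ)/2 - α) := by
      have := Real.rpow_le_rpow_of_exponent_le hlam (show (0:ℝ) ≤ 1/2 - α by linarith)
      rwa [Real.rpow_zero] at this
    have hI : (∫ x in (lam ^ (-α) : ℝ)..(1:ℝ), x ^ (-c))
        = ((1:ℝ) ^ (-c+1) - (lam ^ (-α) : ℝ) ^ (-c+1)) / (-c+1) := by
      refine integral_rpow (Or.inr ⟨?_, notMem_uIcc_of_lt hτ0 one_pos⟩)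
      intro h
      exact hc1.ne' (by linarith [neg_injective h])
    have hτpow : ((lam ^ (-α) : ℝ)) ^ (-c+1) = lam ^ ((1:ℝ)/2 - α) := by
      rw [← Real.rpow_mul hlam0.le]
      congr 1
      linear_combination hαc
    have hIb : (∫ x in (lam ^ (-α) : ℝ)..(1:ℝ), x ^ (-c))
        ≤ lam ^ ((1:ℝ)/2 - α) / (c-1) := by
      rw [hI, Real.one_rpow, hτpow]
      rw [div_eq_div_iff (by linarith) (by linarith) |>.mpr (by ring :
        (1 - lam ^ ((1:ℝ)/2 - α)) * (c-1) = (lam ^ ((1:ℝ)/2 - α) - 1) * (-c+1))]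
      gcongr <;> linarith
    have hIb2 : (2:ℝ)^c * (∫ x in (lam ^ (-α) : ℝ)..(1:ℝ), x ^ (-c))
        ≤ (2:ℝ)^c/(c-1) * lam ^ ((1:ℝ)/2 - α) := by
      calc (2:ℝ)^c * (∫ x in (lam ^ (-α) : ℝ)..(1:ℝ), x ^ (-c))
          ≤ (2:ℝ)^c * (lam ^ ((1:ℝ)/2 - α) / (c-1)) := by
            exact mul_le_mul_of_nonneg_left hIb h2c0.le
        _ = (2:ℝ)^c/(c-1) * lam ^ ((1:ℝ)/2 - α) := by ring
    rw [if_neg (ne_of_lt hlt), max_eq_left (by linarith : (0:ℝ) ≤ 1/2 - α), add_zero, mul_one]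
    have hexp : (2:ℝ)^c * D ≤ (2:ℝ)^c * D * lam ^ ((1:ℝ)/2 - α) := by
      nlinarith [mul_nonneg h2c0.le hD0]
    nlinarith [key, hIb2, hexp, hL1]
  · -- α = 1/2
    subst heq
    refine ⟨1, 1 + 2 * D, one_pos, by linarith, ?_⟩
    intro lam hlam
    have hlam0 : (0:ℝ) < lam := lt_of_lt_of_le one_pos hlam
    have hτ0 : (0:ℝ) < lam ^ (-(1/2:ℝ)) := Real.rpow_pos_of_pos hlam0 _
    have key := aux_main (1/2) k lam (by norm_num) hk hlam
    rw [show (1:ℝ)/(2*(1/2)) = 1 by norm_num] at key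
    rw [Real.rpow_one, ← hD_def] at key
    have hIeq : (∫ x in (lam ^ (-(1/2:ℝ)) : ℝ)..(1:ℝ), x ^ (-(1:ℝ)))
        = (1/2) * Real.log lam := by
      simp only [Real.rpow_neg_one]
      rw [integral_inv (notMem_uIcc_of_lt hτ0 one_pos), one_div, Real.log_inv,
        Real.log_rpow hlam0]
      ring
    rw [hIeq, show (1:ℝ)/2 - 1/2 = 0 by norm_num, Real.rpow_zero] at key
    rw [if_pos rfl, show max ((1:ℝ)/2 - 1/2) 0 = 0 by norm_num, Real.rpow_zero, mul_one]
    have hlog1 : Real.log lam ≤ Real.log (1 + lam) := Real.log_le_log hlam0 (by linarith)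
    have hlog0 : 0 ≤ Real.log (1 + lam) := Real.log_nonneg (by linarith)
    nlinarith [key, mul_nonneg hD0 hlog0]
  · -- α > 1/2, c < 1
    obtain ⟨c, hc_def⟩ : ∃ c : ℝ, c = 1/(2*α) := ⟨_, rfl⟩
    rw [show (1:ℝ)/(2*α) = c from hc_def.symm]
    have hc : 0 < c := by rw [hc_def]; positivity
    have h2c0 : (0:ℝ) < (2:ℝ) ^ c := Real.rpow_pos_of_pos two_pos _
    have hc1 : c < 1 := by
      rw [hc_def, div_lt_one (by positivity)]
      linarith
    have ha2 : (0:ℝ) < 1 + (2:ℝ)^c/(1-c) + (2:ℝ)^c * D := by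
      have h1 : 0 ≤ (2:ℝ)^c/(1-c) := div_nonneg h2c0.le (by linarith)
      have h2 : 0 ≤ (2:ℝ)^c * D := mul_nonneg h2c0.le hD0
      linarith
    refine ⟨1, 1 + (2:ℝ)^c/(1-c) + (2:ℝ)^c * D, one_pos, ha2, ?_⟩
    intro lam hlam
    have hlam0 : (0:ℝ) < lam := lt_of_lt_of_le one_pos hlam
    have hτ0 : (0:ℝ) < lam ^ (-α) := Real.rpow_pos_of_pos hlam0 _
    have key := aux_main α k lam hα hk hlam
    rw [← hc_def, ← hD_def] at key
    have hI : (∫ x in (lam ^ (-α) : ℝ)..(1:ℝ), x ^ (-c))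
        = ((1:ℝ) ^ (-c+1) - (lam ^ (-α) : ℝ) ^ (-c+1)) / (-c+1) :=
      integral_rpow (Or.inl (by linarith))
    have hIb : (∫ x in (lam ^ (-α) : ℝ)..(1:ℝ), x ^ (-c)) ≤ 1/(1-c) := by
      rw [hI, Real.one_rpow, show -c+1 = 1-c by ring]
      have hpow : (0:ℝ) ≤ (lam ^ (-α) : ℝ) ^ (1-c) := Real.rpow_nonneg hτ0.le _
      gcongr <;> linarith
    have hIb2 : (2:ℝ)^c * (∫ x in (lam ^ (-α) : ℝ)..(1:ℝ), x ^ (-c))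
        ≤ (2:ℝ)^c/(1-c) := by
      calc (2:ℝ)^c * (∫ x in (lam ^ (-α) : ℝ)..(1:ℝ), x ^ (-c))
          ≤ (2:ℝ)^c * (1/(1-c)) := mul_le_mul_of_nonneg_left hIb h2c0.le
        _ = (2:ℝ)^c/(1-c) := by ring
    have hL : lam ^ ((1:ℝ)/2 - α) ≤ 1 :=
      Real.rpow_le_one_of_one_le_of_nonpos hlam (by linarith)
    rw [if_neg (ne_of_gt hgt), max_eq_right (by linarith : (1:ℝ)/2 - α ≤ 0), Real.rpow_zero,
      add_zero, mul_one, mul_one]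
    linarith [key, hIb2, hL]
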